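/- Let \beta > 0 be a real number and let (b_k)_{k \ge 1} be a sequence of nonnegative real numbers with b_1 = 1 such that the series \alpha := \sum_{k \ge 1} b_k\, k^{-2\beta} converges and \alpha < 2. Let (s'_n)_{n \ge 1} be a sequence of nonnegative real numbers, and for each n \ge 1 define s_n := \sum_{k=1}^{\lfloor \sqrt{n} \rfloor} n^{-\beta}\, \lfloor n/k^2 \rfloor^{\beta}\, b_k\, s'_{\lfloor n/k^2 \rfloor}. If s_n \to 1 as n \to \infty, then s'_n \to 1/\alpha as n \to \infty. -/

import Mathlib

open Filter Topology

lemma aux_ratio_tendsto (k : ℕ) (hk : 1 ≤ k) :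
    Tendsto (fun n : ℕ => ((n / k ^ 2 : ℕ) : ℝ) / n) atTop (𝓝 (((k : ℝ) ^ 2)⁻¹)) := by
  have hk2 : (0:ℝ) < (k:ℝ)^2 := by positivity
  have hk2' : 0 < k^2 := by positivity
  have hlow : Tendsto (fun n : ℕ => ((k:ℝ)^2)⁻¹ - 1 / n) atTop (𝓝 (((k:ℝ)^2)⁻¹)) := by
    have := tendsto_one_div_atTop_nhds_zero_nat (𝕜 := ℝ)
    simpa using (tendsto_const_nhds (x := ((k:ℝ)^2)⁻¹) (f := atTop)).sub this
  refine tendsto_of_tendsto_of_tendsto_of_le_of_le' hlow tendsto_const_nhds ?_ ?_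
  · filter_upwards [eventually_ge_atTop 1] with n hn
    have hn0 : (0:ℝ) < n := by exact_mod_cast hn
    have h1 : (n : ℝ) < (k:ℝ)^2 * ((n / k ^ 2 : ℕ) : ℝ) + (k:ℝ)^2 := by
      have e := Nat.div_add_mod n (k^2)
      have hm : n % k^2 < k^2 := Nat.mod_lt _ hk2'
      have e' : (k:ℝ)^2 * ((n / k^2 : ℕ) : ℝ) + ((n % k^2 : ℕ) : ℝ) = n := by
        exact_mod_cast e
      have hm' : ((n % k^2 : ℕ) : ℝ) < (k:ℝ)^2 := by exact_mod_cast hm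
      nlinarith
    have h3 : (n:ℝ)/(k:ℝ)^2 ≤ ((n/k^2:ℕ):ℝ) + 1 := by
      rw [div_le_iff₀ hk2]; nlinarith
    have h4 : (((k:ℝ)^2)⁻¹ - 1/n) * n = (n:ℝ)/(k:ℝ)^2 - 1 := by
      field_simp
    rw [le_div_iff₀ hn0, h4]; linarith
  · filter_upwards [eventually_ge_atTop 1] with n hn
    have hn0 : (0:ℝ) < n := by exact_mod_cast hn
    have h2 : ((n / k ^ 2 : ℕ) : ℝ) ≤ (n : ℝ) / (k:ℝ)^2 := by
      have := Nat.cast_div_le (α := ℝ) (m := n) (n := k^2)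
      push_cast at this
      exact this
    rw [div_le_iff₀ hn0]
    calc ((n / k ^ 2 : ℕ) : ℝ) ≤ (n : ℝ) / (k:ℝ)^2 := h2
      _ = ((k:ℝ)^2)⁻¹ * n := by ring

lemma aux_ratio_le (k n : ℕ) (hk : 1 ≤ k) :
    ((n / k ^ 2 : ℕ) : ℝ) / n ≤ ((k : ℝ) ^ 2)⁻¹ := by
  have hk2 : (0:ℝ) < (k:ℝ)^2 := by positivity
  rcases Nat.eq_zero_or_pos n with h | h
  · simp [h]
  have hn0 : (0:ℝ) < n := by exact_mod_cast h
  have h2 : ((n / k ^ 2 : ℕ) : ℝ) ≤ (n : ℝ) / (k:ℝ)^2 := by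
    have := Nat.cast_div_le (α := ℝ) (m := n) (n := k^2)
    push_cast at this
    exact this
  rw [div_le_iff₀ hn0]
  calc ((n / k ^ 2 : ℕ) : ℝ) ≤ (n : ℝ) / (k:ℝ)^2 := h2
    _ = ((k:ℝ)^2)⁻¹ * n := by ring

lemma aux_kpow (β : ℝ) (k : ℕ) : (((k:ℝ)^2)⁻¹) ^ β = (k:ℝ) ^ (-(2*β)) := by
  rw [← Real.rpow_natCast (k:ℝ) 2, ← Real.rpow_neg (Nat.cast_nonneg k),
    ← Real.rpow_mul (Nat.cast_nonneg k)]
  norm_num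

lemma aux_mulform (β : ℝ) (n : ℕ) (hn : 1 ≤ n) (x : ℝ) (hx : 0 ≤ x) :
    (n:ℝ)^(-β) * x^β = (x/(n:ℝ))^β := by
  rw [Real.div_rpow hx (Nat.cast_nonneg n), Real.rpow_neg (Nat.cast_nonneg n)]
  ring

lemma aux_w_tendsto (β : ℝ) (hβ : 0 < β) (k : ℕ) (hk : 1 ≤ k) :
    Tendsto (fun n : ℕ => (n:ℝ)^(-β) * ((n / k^2 : ℕ):ℝ)^β) atTop (𝓝 ((k:ℝ)^(-(2*β)))) := by
  have h := (aux_ratio_tendsto k hk).rpow_const (p := β)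
    (Or.inl (by positivity))
  rw [aux_kpow β k] at h
  refine h.congr' ?_
  filter_upwards [eventually_ge_atTop 1] with n hn
  rw [aux_mulform β n hn _ (Nat.cast_nonneg _)]

lemma aux_w_le (β : ℝ) (hβ : 0 < β) (n k : ℕ) (hn : 1 ≤ n) (hk : 1 ≤ k) :
    (n:ℝ)^(-β) * ((n / k^2 : ℕ):ℝ)^β ≤ (k:ℝ)^(-(2*β)) := by
  rw [aux_mulform β n hn _ (Nat.cast_nonneg _), ← aux_kpow β k]
  exact Real.rpow_le_rpow (by positivity) (aux_ratio_le k n hk) hβ.le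

set_option maxHeartbeats 1000000 in
/-- A real-sequence lemma: if `α = ∑_{k ≥ 1} b_k k^{-2β} < 2` with `b_1 = 1`,
`b_k ≥ 0`, and the sequences `s'_n ≥ 0` and
`s_n = ∑_{k=1}^{⌊√n⌋} n^{-β} ⌊n/k²⌋^β b_k s'_{⌊n/k²⌋}` satisfy `s_n → 1`,
then `s'_n → 1/α`. -/
theorem tendsto_of_weighted_floor_sum_tendsto
    (β : ℝ) (hβ : 0 < β)
    (b : ℕ → ℝ) (hb : ∀ k, 0 ≤ b k) (hb1 : b 1 = 1)
    (α : ℝ)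
    (hα : HasSum (fun k : ℕ => b (k + 1) * (((k : ℝ) + 1) ^ (-(2 * β)))) α)
    (hα2 : α < 2)
    (s' : ℕ → ℝ) (hs' : ∀ n, 0 ≤ s' n)
    (s : ℕ → ℝ)
    (hs : ∀ n : ℕ, s n = ∑ k ∈ Finset.Icc 1 (Nat.sqrt n),
        (n : ℝ) ^ (-β) * ((n / k ^ 2 : ℕ) : ℝ) ^ β * b k * s' (n / k ^ 2))
    (hlim : Tendsto s atTop (𝓝 1)) :
    Tendsto s' atTop (𝓝 (1 / α)) := by
  -- the weight function and its limit
  set c : ℕ → ℝ := fun k => b k * (k:ℝ) ^ (-(2*β)) with hcdef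
  have hc0 : ∀ k, 0 ≤ c k := fun k => mul_nonneg (hb k) (Real.rpow_nonneg (Nat.cast_nonneg k) _)
  have hc1 : c 1 = 1 := by simp [hcdef, hb1]
  set w : ℕ → ℕ → ℝ := fun n k => (n : ℝ) ^ (-β) * ((n / k ^ 2 : ℕ) : ℝ) ^ β * b k with hwdef
  have hw0 : ∀ n k, 0 ≤ w n k := by
    intro n k
    exact mul_nonneg (mul_nonneg (Real.rpow_nonneg (Nat.cast_nonneg n) _)
      (Real.rpow_nonneg (Nat.cast_nonneg _) _)) (hb k)
  have hwle : ∀ n k, 1 ≤ n → 1 ≤ k → w n k ≤ c k := by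
    intro n k hn hk
    have := aux_w_le β hβ n k hn hk
    calc w n k = ((n : ℝ) ^ (-β) * ((n / k ^ 2 : ℕ) : ℝ) ^ β) * b k := by ring
      _ ≤ (k:ℝ) ^ (-(2*β)) * b k := mul_le_mul_of_nonneg_right this (hb k)
      _ = c k := by rw [hcdef]; ring
  have hwtendsto : ∀ k, 1 ≤ k → Tendsto (fun n => w n k) atTop (𝓝 (c k)) := by
    intro k hk
    have h := (aux_w_tendsto β hβ k hk).mul_const (b k)
    have hck : c k = (k:ℝ) ^ (-(2*β)) * b k := by rw [hcdef]; ring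
    rw [hck]
    simp only [hwdef]
    exact h
  -- partial sums of c
  set P : ℕ → ℝ := fun K => ∑ k ∈ Finset.Icc 1 K, c k with hPdef
  have hP : Tendsto P atTop (𝓝 α) := by
    have h := hα.tendsto_sum_nat
    refine h.congr fun K => ?_
    simp only [hPdef]
    rw [← Finset.Ico_add_one_right_eq_Icc, Finset.sum_Ico_eq_sum_range]
    refine Finset.sum_congr (by norm_num) fun i _ => ?_
    simp only [hcdef]
    rw [Nat.add_comm 1 i]
    push_cast
    ring
  have hPmono : Monotone P := by
    intro i j hij
    simp only [hPdef]
    exact Finset.sum_le_sum_of_subset_of_nonneg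
      (Finset.Icc_subset_Icc_right hij) (fun k _ _ => hc0 k)
  have hPle : ∀ K, P K ≤ α := hPmono.ge_of_tendsto hP
  have hP1 : P 1 = 1 := by simp [hPdef, hc1]
  have hα1 : 1 ≤ α := hP1 ▸ hPle 1
  have hα0 : 0 < α := lt_of_lt_of_le one_pos hα1
  have hPtail : ∀ K N, 1 ≤ K → P N - P K ≤ α - P K := by
    intro K N _
    linarith [hPle N]
  have hcle : ∀ k, 1 ≤ k → c k ≤ α := by
    intro k hk
    calc c k ≤ P k := by
          refine Finset.single_le_sum (fun i _ => hc0 i) ?_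
          simp [hk]
      _ ≤ α := hPle k
  -- s' is eventually bounded
  have hs'les : ∀ n, 1 ≤ n → s' n ≤ s n := by
    intro n hn
    have h1mem : 1 ∈ Finset.Icc 1 (Nat.sqrt n) := by
      have := Nat.sqrt_pos.2 hn
      simp only [Finset.mem_Icc]
      omega
    have hterm : w n 1 * s' (n / 1 ^ 2) = s' n := by
      have hn0 : (0:ℝ) < n := by exact_mod_cast hn
      simp only [hwdef, one_pow, Nat.div_one, hb1, mul_one]
      rw [Real.rpow_neg hn0.le]
      rw [inv_mul_cancel₀ (ne_of_gt (Real.rpow_pos_of_pos hn0 β)), one_mul]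
    calc s' n = w n 1 * s' (n / 1 ^ 2) := hterm.symm
      _ ≤ ∑ k ∈ Finset.Icc 1 (Nat.sqrt n), w n k * s' (n / k ^ 2) :=
          Finset.single_le_sum (f := fun k => w n k * s' (n / k ^ 2))
            (fun i _ => mul_nonneg (hw0 n i) (hs' _)) h1mem
      _ = s n := (hs n).symm
  obtain ⟨C0, hC0⟩ := hlim.bddAbove_range
  set C : ℝ := max C0 0 with hCdef
  have hC : ∀ n, 1 ≤ n → s' n ≤ C := fun n hn =>
    (hs'les n hn).trans (le_max_of_le_left (hC0 ⟨n, rfl⟩))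
  have hCnn : 0 ≤ C := le_max_right _ _
  -- limsup and liminf
  have hbddle : IsBoundedUnder (· ≤ ·) atTop s' :=
    ⟨C, eventually_map.2 (by filter_upwards [eventually_ge_atTop 1] with n hn using hC n hn)⟩
  have hbddge : IsBoundedUnder (· ≥ ·) atTop s' :=
    ⟨0, eventually_map.2 (Eventually.of_forall hs')⟩
  set M : ℝ := limsup s' atTop with hMdef
  set m : ℝ := liminf s' atTop with hmdef
  have hmM : m ≤ M := liminf_le_limsup hbddle hbddge
  have hm0 : 0 ≤ m := le_liminf_of_le hbddle.isCoboundedUnder_ge (Eventually.of_forall hs')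
  have hM0 : 0 ≤ M := hm0.trans hmM
  -- splitting off the k = 1 term
  have hsplit : ∀ n, 1 ≤ n → s n = s' n + ∑ k ∈ Finset.Ioc 1 (Nat.sqrt n), w n k * s' (n / k ^ 2) := by
    intro n hn
    have heq : Finset.Icc 1 (Nat.sqrt n) = insert 1 (Finset.Ioc 1 (Nat.sqrt n)) := by
      ext x
      simp only [Finset.mem_Icc, Finset.mem_insert, Finset.mem_Ioc]
      have := Nat.sqrt_pos.2 hn
      omega
    have hterm : w n 1 * s' (n / 1 ^ 2) = s' n := by
      have hn0 : (0:ℝ) < n := by exact_mod_cast hn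
      simp only [hwdef, one_pow, Nat.div_one, hb1, mul_one]
      rw [Real.rpow_neg hn0.le]
      rw [inv_mul_cancel₀ (ne_of_gt (Real.rpow_pos_of_pos hn0 β)), one_mul]
    rw [hs n, heq, Finset.sum_insert (by simp), hterm]
  -- divisions tend to infinity
  have hdivtop : ∀ k : ℕ, 1 ≤ k → Tendsto (fun n : ℕ => n / k ^ 2) atTop atTop := by
    intro k hk
    refine tendsto_atTop.2 fun N => ?_
    filter_upwards [eventually_ge_atTop (N * k ^ 2)] with n hn
    exact (Nat.le_div_iff_mul_le (by positivity)).2 hn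
  have hsqrttop : Tendsto Nat.sqrt atTop atTop := by
    refine tendsto_atTop.2 fun N => ?_
    filter_upwards [eventually_ge_atTop (N * N)] with n hn
    exact Nat.le_sqrt.2 hn
  -- the sum of c over Ioc 1 K
  have hsumc : ∀ K, 1 ≤ K → ∑ k ∈ Finset.Ioc 1 K, c k = P K - 1 := by
    intro K hK
    have heq : Finset.Icc 1 K = insert 1 (Finset.Ioc 1 K) := by
      ext x
      simp only [Finset.mem_Icc, Finset.mem_insert, Finset.mem_Ioc]
      omega
    have : P K = 1 + ∑ k ∈ Finset.Ioc 1 K, c k := by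
      rw [hPdef]
      simp only []
      rw [heq, Finset.sum_insert (by simp), hc1]
    linarith
  -- L1 : eventual lower bound on the tail sum
  have L1 : ∀ ε : ℝ, 0 < ε → ∀ᶠ n in atTop,
      (α - 1) * m - ε ≤ ∑ k ∈ Finset.Ioc 1 (Nat.sqrt n), w n k * s' (n / k ^ 2) := by
    intro ε hε
    have hm1 : (0:ℝ) < 2 * (m + 1) := by linarith
    obtain ⟨K0, hK0⟩ := (hP.eventually (eventually_gt_nhds
      (show α - ε / (2 * (m + 1)) < α by
        have : 0 < ε / (2 * (m + 1)) := div_pos hε hm1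
        linarith))).exists
    set K := max K0 1 with hKdef
    have hK1 : 1 ≤ K := le_max_right _ _
    have hKr : (0:ℝ) < K := by exact_mod_cast hK1
    have hPK : α - ε / (2 * (m + 1)) < P K := lt_of_lt_of_le hK0 (hPmono (le_max_left _ _))
    have hCα : (0:ℝ) < C + α := by linarith
    have hden : (0:ℝ) < 2 * ((K:ℝ) * (C + α) + 1) := by positivity
    set δ : ℝ := ε / (2 * ((K:ℝ) * (C + α) + 1)) with hδdef
    have hδ : 0 < δ := div_pos hε hden
    have hδe : δ * (2 * ((K:ℝ) * (C + α) + 1)) = ε := div_mul_cancel₀ _ (ne_of_gt hden)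
    have hev1 : ∀ᶠ n in atTop, ∀ k ∈ Finset.Ioc 1 K, c k - δ < w n k := by
      rw [Filter.eventually_all_finset]
      intro k hk
      exact (hwtendsto k (Finset.mem_Ioc.1 hk).1.le).eventually
        (eventually_gt_nhds (by linarith))
    have hev2' : ∀ᶠ j in atTop, m - δ < s' j :=
      eventually_lt_of_lt_liminf (by rw [← hmdef]; linarith) hbddge
    have hev2 : ∀ᶠ n in atTop, ∀ k ∈ Finset.Ioc 1 K, m - δ < s' (n / k ^ 2) := by
      rw [Filter.eventually_all_finset]
      intro k hk
      exact (hdivtop k (Finset.mem_Ioc.1 hk).1.le).eventually hev2'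
    have hev3 : ∀ᶠ n in atTop, ∀ k ∈ Finset.Ioc 1 K, s' (n / k ^ 2) ≤ C := by
      rw [Filter.eventually_all_finset]
      intro k hk
      exact (hdivtop k (Finset.mem_Ioc.1 hk).1.le).eventually
        (eventually_atTop.2 ⟨1, fun j hj => hC j hj⟩)
    filter_upwards [hev1, hev2, hev3, hsqrttop.eventually_ge_atTop K] with n h1 h2 h3 hKn
    have hstep1 : ∑ k ∈ Finset.Ioc 1 K, w n k * s' (n / k ^ 2)
        ≤ ∑ k ∈ Finset.Ioc 1 (Nat.sqrt n), w n k * s' (n / k ^ 2) :=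
      Finset.sum_le_sum_of_subset_of_nonneg (Finset.Ioc_subset_Ioc_right hKn)
        (fun i _ _ => mul_nonneg (hw0 n i) (hs' _))
    have hterm : ∀ k ∈ Finset.Ioc 1 K, c k * m - δ * (C + α) ≤ w n k * s' (n / k ^ 2) := by
      intro k hk
      have hk1 : 1 ≤ k := (Finset.mem_Ioc.1 hk).1.le
      have e1 : (c k - δ) * s' (n / k ^ 2) ≤ w n k * s' (n / k ^ 2) :=
        mul_le_mul_of_nonneg_right (h1 k hk).le (hs' _)
      have e3 : c k * (m - δ) ≤ c k * s' (n / k ^ 2) :=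
        mul_le_mul_of_nonneg_left (h2 k hk).le (hc0 k)
      have e4 : δ * s' (n / k ^ 2) ≤ δ * C := mul_le_mul_of_nonneg_left (h3 k hk) hδ.le
      have e5 : c k * δ ≤ α * δ := mul_le_mul_of_nonneg_right (hcle k hk1) hδ.le
      nlinarith [e1, e3, e4, e5]
    have hstep2 : (P K - 1) * m - (K:ℝ) * (δ * (C + α))
        ≤ ∑ k ∈ Finset.Ioc 1 K, w n k * s' (n / k ^ 2) := by
      have := Finset.sum_le_sum hterm
      have hre : ∑ k ∈ Finset.Ioc 1 K, (c k * m - δ * (C + α))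
          = (P K - 1) * m - ((Finset.Ioc 1 K).card : ℝ) * (δ * (C + α)) := by
        rw [Finset.sum_sub_distrib, ← Finset.sum_mul, hsumc K hK1, Finset.sum_const,
          nsmul_eq_mul]
      rw [hre] at this
      refine le_trans ?_ this
      have hcard : ((Finset.Ioc 1 K).card : ℝ) ≤ (K:ℝ) := by
        rw [Nat.card_Ioc]
        exact_mod_cast Nat.sub_le K 1
      have : (0:ℝ) ≤ δ * (C + α) := mul_nonneg hδ.le hCα.le
      nlinarith [hcard, this]
    have hA : (α - P K) * m ≤ ε / 2 := by
      have h1' : (α - P K) * m ≤ (ε / (2 * (m + 1))) * m := by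
        apply mul_le_mul_of_nonneg_right _ hm0
        linarith
      have h2' : (ε / (2 * (m + 1))) * (2 * (m + 1)) = ε := div_mul_cancel₀ _ (ne_of_gt hm1)
      nlinarith [h1', h2', div_pos hε hm1, hm0]
    have hB : (K:ℝ) * (δ * (C + α)) ≤ ε / 2 := by nlinarith [hδe, hδ, hKr, hCα]
    have := hstep1
    nlinarith [hstep1, hstep2, hA, hB, hm0]
  -- L2 : eventual upper bound on the tail sum
  have L2 : ∀ ε : ℝ, 0 < ε → ∀ᶠ n in atTop,
      ∑ k ∈ Finset.Ioc 1 (Nat.sqrt n), w n k * s' (n / k ^ 2) ≤ (α - 1) * M + ε := by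
    intro ε hε
    have hC1 : (0:ℝ) < 2 * (C + 1) := by linarith
    obtain ⟨K0, hK0⟩ := (hP.eventually (eventually_gt_nhds
      (show α - ε / (2 * (C + 1)) < α by
        have : 0 < ε / (2 * (C + 1)) := div_pos hε hC1
        linarith))).exists
    set K := max K0 1 with hKdef
    have hK1 : 1 ≤ K := le_max_right _ _
    have hPK : α - ε / (2 * (C + 1)) < P K := lt_of_lt_of_le hK0 (hPmono (le_max_left _ _))
    have hα1' : (0:ℝ) < 2 * (α + 1) := by linarith
    set δ : ℝ := ε / (2 * (α + 1)) with hδdef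
    have hδ : 0 < δ := div_pos hε hα1'
    have hδe : δ * (2 * (α + 1)) = ε := div_mul_cancel₀ _ (ne_of_gt hα1')
    have hev2' : ∀ᶠ j in atTop, s' j < M + δ :=
      eventually_lt_of_limsup_lt (by rw [← hMdef]; linarith) hbddle
    have hev2 : ∀ᶠ n in atTop, ∀ k ∈ Finset.Ioc 1 K, s' (n / k ^ 2) < M + δ := by
      rw [Filter.eventually_all_finset]
      intro k hk
      exact (hdivtop k (Finset.mem_Ioc.1 hk).1.le).eventually hev2'
    filter_upwards [hev2, hsqrttop.eventually_ge_atTop K, eventually_ge_atTop 1]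
      with n h2 hKn hn1
    have hsplit2 : ∑ k ∈ Finset.Ioc 1 K, w n k * s' (n / k ^ 2)
        + ∑ k ∈ Finset.Ioc K (Nat.sqrt n), w n k * s' (n / k ^ 2)
        = ∑ k ∈ Finset.Ioc 1 (Nat.sqrt n), w n k * s' (n / k ^ 2) :=
      Finset.sum_Ioc_consecutive _ hK1 hKn
    have hhead : ∑ k ∈ Finset.Ioc 1 K, w n k * s' (n / k ^ 2) ≤ (α - 1) * M + ε/2 := by
      have hterm : ∀ k ∈ Finset.Ioc 1 K, w n k * s' (n / k ^ 2) ≤ c k * (M + δ) := by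
        intro k hk
        exact mul_le_mul (hwle n k hn1 (Finset.mem_Ioc.1 hk).1.le) (h2 k hk).le (hs' _) (hc0 k)
      have h1 := Finset.sum_le_sum hterm
      rw [← Finset.sum_mul, hsumc K hK1] at h1
      have hPK1 : 0 ≤ P K - 1 := by
        have : P 1 ≤ P K := hPmono hK1
        rw [hP1] at this
        linarith
      have h2' : (P K - 1) * (M + δ) ≤ (α - 1) * (M + δ) := by
        apply mul_le_mul_of_nonneg_right _ (by linarith)
        linarith [hPle K]
      have h3' : (α - 1) * δ ≤ ε / 2 := by nlinarith [hδe, hδ]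
      nlinarith [h1, h2', h3']
    have htail : ∑ k ∈ Finset.Ioc K (Nat.sqrt n), w n k * s' (n / k ^ 2) ≤ ε/2 := by
      have hterm : ∀ k ∈ Finset.Ioc K (Nat.sqrt n), w n k * s' (n / k ^ 2) ≤ c k * C := by
        intro k hk
        have hk1 : 1 ≤ k := le_trans hK1 (Finset.mem_Ioc.1 hk).1.le
        have hks : k ≤ Nat.sqrt n := (Finset.mem_Ioc.1 hk).2
        have hdiv1 : 1 ≤ n / k ^ 2 := by
          have : k * k ≤ n := Nat.le_sqrt.1 hks
          refine (Nat.one_le_div_iff (by positivity)).2 ?_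
          rw [pow_two]
          exact this
        exact mul_le_mul (hwle n k hn1 hk1) (hC _ hdiv1) (hs' _) (hc0 k)
      have h1 := Finset.sum_le_sum hterm
      rw [← Finset.sum_mul] at h1
      have hsum2 : ∑ k ∈ Finset.Ioc K (Nat.sqrt n), c k = P (Nat.sqrt n) - P K := by
        have := Finset.sum_Ioc_consecutive (fun k => c k) hK1 hKn
        rw [hsumc K hK1, hsumc (Nat.sqrt n) (le_trans hK1 hKn)] at this
        linarith
      rw [hsum2] at h1
      have h2' : (P (Nat.sqrt n) - P K) * C ≤ (ε / (2 * (C + 1))) * C := by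
        apply mul_le_mul_of_nonneg_right _ hCnn
        linarith [hPle (Nat.sqrt n)]
      have h3' : (ε / (2 * (C + 1))) * (2 * (C + 1)) = ε := div_mul_cancel₀ _ (ne_of_gt hC1)
      nlinarith [h1, h2', h3', div_pos hε hC1, hCnn]
    linarith [hsplit2, hhead, htail]
  -- the two key inequalities
  have ineq1 : M + (α - 1) * m ≤ 1 := by
    refine le_of_forall_pos_le_add fun ε hε => ?_
    have hfreq : ∃ᶠ n in atTop, M - ε/3 < s' n :=
      frequently_lt_of_lt_limsup hbddge.isCoboundedUnder_le (by rw [← hMdef]; linarith)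
    have hev := L1 (ε/3) (by linarith)
    have hevs : ∀ᶠ n in atTop, s n < 1 + ε/3 :=
      hlim.eventually (eventually_lt_nhds (by linarith))
    obtain ⟨n, hn1, hn2, hn3, hn4⟩ :=
      (hfreq.and_eventually (hev.and (hevs.and (eventually_ge_atTop 1)))).exists
    have hsp := hsplit n hn4
    linarith [hsp, hn1, hn2, hn3]
  have ineq2 : 1 ≤ m + (α - 1) * M := by
    refine le_of_forall_pos_le_add fun ε hε => ?_
    have hfreq : ∃ᶠ n in atTop, s' n < m + ε/3 :=
      frequently_lt_of_liminf_lt hbddle.isCoboundedUnder_ge (by rw [← hmdef]; linarith)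
    have hev := L2 (ε/3) (by linarith)
    have hevs : ∀ᶠ n in atTop, 1 - ε/3 < s n :=
      hlim.eventually (eventually_gt_nhds (by linarith))
    obtain ⟨n, hn1, hn2, hn3, hn4⟩ :=
      (hfreq.and_eventually (hev.and (hevs.and (eventually_ge_atTop 1)))).exists
    have hsp := hsplit n hn4
    linarith [hsp, hn1, hn2, hn3]
  have hMm : M = m := by nlinarith [ineq1, ineq2, hmM, hα2]
  have hM1 : α * M = 1 := by nlinarith [ineq1, ineq2, hMm]
  have hMval : M = 1 / α := by
    field_simp
    linarith [hM1]
  refine tendsto_of_liminf_eq_limsup ?_ ?_ hbddle hbddge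
  · rw [← hmdef, ← hMm]
    exact hMval
  · rw [← hMdef]
    exact hMval
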